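/- arXiv:1108.5295 — 5 statements merged into one kernel-verified Lean document; each statement's English description precedes it below -/
import Mathlib

section
/- The ~-closure of a regular language need not be regular: for the alphabet with Act_1 = {a} and Act_2 = {b} (two ports), the ~-closure of the regular language (ab)* ∪ (ab)*a is the set of all words w such that |w|_a - |w|_b ∈ {0,1} ... and this closure intersected with b*a* equals { b^m a^k : k = m or k = m+1 }, which is not regular; hence the ~-closure is not regular. -/
/-- Two ports with singleton alphabets: event `true` (= `a`) at port 1,
event `false` (= `b`) at port 2. -/
def proj (p : Bool) (σ : List Bool) : List Bool :=
  σ.filter (fun a => a = p)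

def traceEquiv (σ σ' : List Bool) : Prop :=
  ∀ p : Bool, proj p σ = proj p σ'

/-- The regular language `(ab)* ∪ (ab)*a`. -/
def Lreg : Language Bool :=
  { w | ∃ m : ℕ, w = (List.replicate m [true, false]).flatten ∨
        w = (List.replicate m [true, false]).flatten ++ [true] }

/-- The `~`-closure of `Lreg`. -/
def closLreg : Language Bool := { w | ∃ w' ∈ Lreg, traceEquiv w w' }

namespace AuxClos

/-! ### Basic counting facts -/

lemma proj_eq_replicate (p : Bool) (σ : List Bool) :
    proj p σ = List.replicate (σ.count p) p := by
  induction σ with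
  | nil => simp [proj]
  | cons x t ih =>
    by_cases h : x = p
    · subst h
      simp [proj, List.count_cons, List.filter] at ih ⊢
      simpa [List.replicate_succ] using ih
    · simp [proj, List.filter, List.count_cons, h, Ne.symm h] at ih ⊢
      simpa using ih

lemma traceEquiv_iff_counts (w w' : List Bool) :
    traceEquiv w w' ↔ ∀ p, w.count p = w'.count p := by
  constructor
  · intro h p
    have := h p
    rw [proj_eq_replicate, proj_eq_replicate] at this
    have := congrArg List.length this
    simpa using this
  · intro h p
    rw [proj_eq_replicate, proj_eq_replicate, h p]

lemma count_flatten_replicate (m : ℕ) (p : Bool) :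
    ((List.replicate m [true, false]).flatten).count p = m := by
  induction m with
  | zero => simp
  | succ n ih =>
    rw [List.replicate_succ, List.flatten_cons, List.count_append, ih]
    cases p <;> simp <;> omega

lemma mem_clos_iff (w : List Bool) :
    w ∈ closLreg ↔ (w.count true = w.count false ∨
      w.count true = w.count false + 1) := by
  constructor
  · rintro ⟨w', ⟨m, h | h⟩, he⟩
    · rw [traceEquiv_iff_counts] at he
      rw [he true, he false, h, count_flatten_replicate, count_flatten_replicate]
      left; rfl
    · rw [traceEquiv_iff_counts] at he
      rw [he true, he false, h]
      simp [List.count_append, count_flatten_replicate]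
  · intro h
    rcases h with h | h
    · refine ⟨(List.replicate (w.count false) [true, false]).flatten,
        ⟨w.count false, Or.inl rfl⟩, ?_⟩
      rw [traceEquiv_iff_counts]
      intro p
      rw [count_flatten_replicate]
      cases p
      · rfl
      · exact h
    · refine ⟨(List.replicate (w.count false) [true, false]).flatten ++ [true],
        ⟨w.count false, Or.inr rfl⟩, ?_⟩
      rw [traceEquiv_iff_counts]
      intro p
      cases p <;> simp [List.count_append, count_flatten_replicate, h]

/-! ### The DFA for `Lreg` -/

def M : DFA Bool (Fin 3) where
  step s x :=
    if s = 0 then (if x then 1 else 2)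
    else if s = 1 then (if x then 2 else 0)
    else 2
  start := 0
  accept := {0, 1}

/-- acceptance predicate from each state -/
def Acc (s : Fin 3) (w : List Bool) : Prop :=
  if s = 0 then w ∈ Lreg
  else if s = 1 then (w = [] ∨ ∃ u, w = false :: u ∧ u ∈ Lreg)
  else False

lemma nil_mem_Lreg : ([] : List Bool) ∈ Lreg := ⟨0, Or.inl rfl⟩

lemma cons_true_mem_Lreg_iff (t : List Bool) :
    (true :: t) ∈ Lreg ↔ (t = [] ∨ ∃ u, t = false :: u ∧ u ∈ Lreg) := by
  constructor
  · rintro ⟨m, h | h⟩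
    · cases m with
      | zero => simp at h
      | succ n =>
        rw [List.replicate_succ, List.flatten_cons] at h
        simp only [List.cons_append, List.nil_append, List.cons.injEq] at h
        right
        exact ⟨(List.replicate n [true, false]).flatten, h.2, ⟨n, Or.inl rfl⟩⟩
    · cases m with
      | zero => simp at h; left; exact h
      | succ n =>
        rw [List.replicate_succ, List.flatten_cons] at h
        simp only [List.cons_append, List.nil_append, List.append_assoc,
          List.cons.injEq] at h
        right
        exact ⟨(List.replicate n [true, false]).flatten ++ [true], h.2,
          ⟨n, Or.inr rfl⟩⟩
  · rintro (rfl | ⟨u, rfl, m, h | h⟩)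
    · exact ⟨0, Or.inr rfl⟩
    · refine ⟨m + 1, Or.inl ?_⟩
      rw [List.replicate_succ, List.flatten_cons, h]
      rfl
    · refine ⟨m + 1, Or.inr ?_⟩
      rw [List.replicate_succ, List.flatten_cons, h]
      rfl

lemma cons_false_not_mem_Lreg (t : List Bool) : (false :: t) ∉ Lreg := by
  rintro ⟨m, h | h⟩
  · cases m with
    | zero => simp at h
    | succ n =>
      rw [List.replicate_succ, List.flatten_cons] at h
      simp at h
  · cases m with
    | zero => simp at h
    | succ n =>
      rw [List.replicate_succ, List.flatten_cons] at h
      simp at h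

lemma acc_step (s : Fin 3) (x : Bool) (t : List Bool) :
    Acc (M.step s x) t ↔ Acc s (x :: t) := by
  fin_cases s <;> cases x <;> simp [Acc, M]
  · exact cons_false_not_mem_Lreg t
  · exact (cons_true_mem_Lreg_iff t).symm

lemma accept_iff (w : List Bool) : ∀ s : Fin 3, (M.evalFrom s w ∈ M.accept ↔ Acc s w) := by
  induction w with
  | nil =>
    intro s
    rw [DFA.evalFrom_nil]
    fin_cases s <;> simp [M, Acc, nil_mem_Lreg]
  | cons x t ih =>
    intro s
    have : M.evalFrom s (x :: t) = M.evalFrom (M.step s x) t := rfl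
    rw [this, ih (M.step s x)]
    exact acc_step s x t

lemma M_accepts : M.accepts = Lreg := by
  ext w
  rw [DFA.mem_accepts]
  have := accept_iff w M.start
  simpa [M, Acc, DFA.eval] using this

end AuxClos

/-- the `~`-closure of a regular language need not be regular:
`Lreg` is regular but its `~`-closure is not. -/
theorem closure_of_regular_not_regular :
    Lreg.IsRegular ∧ ¬ closLreg.IsRegular := by
  constructor
  · exact ⟨Fin 3, inferInstance, AuxClos.M, AuxClos.M_accepts⟩
  · rintro ⟨σ, hfin, M, hM⟩
    set n := Fintype.card σ with hn
    set w : List Bool := List.replicate n false ++ List.replicate n true with hw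
    have hwmem : w ∈ M.accepts := by
      rw [hM, AuxClos.mem_clos_iff]
      left
      simp [hw, List.count_append, List.count_replicate]
    have hlen : Fintype.card σ ≤ w.length := by
      simp [hw]
      omega
    obtain ⟨a, b, c, habc, hablen, hbne, hpump⟩ := M.pumping_lemma hwmem hlen
    -- b consists only of `false`s
    have hbfalse : ∀ x ∈ b, x = false := by
      intro x hx
      have hpre : (a ++ b) <+: w := ⟨c, by rw [habc, List.append_assoc]⟩
      have hlen2 : (a ++ b).length ≤ n := by simpa using hablen
      have hpre2 : (a ++ b) <+: List.replicate n false := by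
        have := hpre
        rw [hw] at this
        obtain ⟨t, ht⟩ := this
        refine List.prefix_of_prefix_length_le ⟨t, ht⟩
          (List.prefix_append (List.replicate n false) (List.replicate n true)) ?_
        simpa using hlen2
      have : x ∈ List.replicate n false := hpre2.subset (List.mem_append_right a hx)
      exact List.eq_of_mem_replicate this
    have hbt : b.count true = 0 := by
      rw [List.count_eq_zero]
      intro h
      exact Bool.noConfusion (hbfalse true h)
    have hbf : 1 ≤ b.count false := by
      rcases List.exists_mem_of_ne_nil b hbne with ⟨x, hx⟩
      have := hbfalse x hx
      subst this
      exact List.count_pos_iff.mpr hx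
    -- pump: a ++ (b ++ b) ++ c is accepted
    have hmem2 : a ++ (b ++ b) ++ c ∈ M.accepts := by
      apply hpump
      refine Language.mem_mul.mpr ⟨a ++ (b ++ b), ?_, c, rfl, by simp⟩
      refine Language.mem_mul.mpr ⟨a, rfl, b ++ b, ?_, rfl⟩
      exact Language.mem_kstar.mpr ⟨[b, b], by simp,
        fun y hy => by
          simp only [List.mem_cons, List.not_mem_nil, or_false] at hy
          rcases hy with rfl | rfl <;> exact rfl⟩
    rw [hM, AuxClos.mem_clos_iff] at hmem2
    have hcw : ∀ p : Bool, w.count p = a.count p + b.count p + c.count p := by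
      intro p
      rw [habc]
      simp [List.count_append, Nat.add_assoc]
    have hwt : w.count true = n := by simp [hw, List.count_append, List.count_replicate]
    have hwf : w.count false = n := by simp [hw, List.count_append, List.count_replicate]
    have h2t : (a ++ (b ++ b) ++ c).count true = n := by
      simp only [List.count_append]
      have := hcw true
      omega
    have h2f : n + 1 ≤ (a ++ (b ++ b) ++ c).count false := by
      simp only [List.count_append]
      have := hcw false
      omega
    omega
end

section
/- Multi-tape finite automata with all states final are closed under concatenation: given such automata N₁, N₂ with the same tapes and alphabets, there is a multi-tape FA M with all states final such that 𝓛(M) = 𝓛(N₁)·𝓛(N₂), where the product of tuples is componentwise concatenation. -/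
/-- Paths in a (nondeterministic) automaton with transition relation `h`. -/
inductive IsPath {A S : Type} (h : S → A → S → Prop) : S → List A → S → Prop
  | nil (s : S) : IsPath h s [] s
  | cons {s : S} {a : A} {s' : S} {w : List A} {t : S} :
      h s a s' → IsPath h s' w t → IsPath h s (a :: w) t

/-- The tuple language of a multi-tape FA in which all states are final:
a tuple `w : Fin r → List A` is accepted iff some word `σ` labels a path
from the initial state whose projection on each tape `i` is `w i`. -/
def TupleLang {A : Type} {r : ℕ} (tape : A → Fin r) {S : Type}
    (init : S) (h : S → A → S → Prop) : Set (Fin r → List A) :=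
  { w | ∃ σ : List A, ∃ t : S, IsPath h init σ t ∧
      ∀ i : Fin r, σ.filter (fun a => tape a = i) = w i }

/-- multi-tape FA with all states final are closed under
(componentwise) concatenation of tuple languages. -/
theorem mfa_concat_closed {A : Type} {r : ℕ} (tape : A → Fin r)
    {S₁ : Type} [Fintype S₁] (init₁ : S₁) (h₁ : S₁ → A → S₁ → Prop)
    {S₂ : Type} [Fintype S₂] (init₂ : S₂) (h₂ : S₂ → A → S₂ → Prop) :
    ∃ (S : Type) (_ : Fintype S) (init : S) (h : S → A → S → Prop),
      TupleLang tape init h =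
        { w | ∃ u ∈ TupleLang tape init₁ h₁, ∃ v ∈ TupleLang tape init₂ h₂,
            ∀ i : Fin r, w i = u i ++ v i } := by
  classical
  refine ⟨S₁ ⊕ S₂, inferInstance, Sum.inl init₁,
    fun s a s' => match s, s' with
      | .inl x, .inl y => h₁ x a y
      | .inl _, .inr y => h₂ init₂ a y
      | .inr x, .inr y => h₂ x a y
      | .inr _, .inl _ => False, ?_⟩
  set h : S₁ ⊕ S₂ → A → S₁ ⊕ S₂ → Prop := fun s a s' => match s, s' with
      | .inl x, .inl y => h₁ x a y
      | .inl _, .inr y => h₂ init₂ a y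
      | .inr x, .inr y => h₂ x a y
      | .inr _, .inl _ => False with hdef
  have split2 : ∀ (s : S₁ ⊕ S₂) σ t, IsPath h s σ t → ∀ s₂, s = .inr s₂ →
      ∃ t₂, IsPath h₂ s₂ σ t₂ := by
    intro s σ t p
    induction p with
    | nil s => exact fun s₂ _ => ⟨s₂, .nil _⟩
    | @cons s a s' w t ha _ ih =>
      rintro s₂ rfl
      cases s' with
      | inl y => exact absurd ha (by simp [hdef])
      | inr y =>
        obtain ⟨t₂, q⟩ := ih y rfl
        exact ⟨t₂, .cons ha q⟩
  have split1 : ∀ (s : S₁ ⊕ S₂) σ t, IsPath h s σ t → ∀ s₁, s = .inl s₁ →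
      ∃ σ₁ σ₂ t₁ t₂, σ = σ₁ ++ σ₂ ∧ IsPath h₁ s₁ σ₁ t₁ ∧ IsPath h₂ init₂ σ₂ t₂ := by
    intro s σ t p
    induction p with
    | nil s => exact fun s₁ _ => ⟨[], [], s₁, init₂, rfl, .nil _, .nil _⟩
    | @cons s a s' w t ha q ih =>
      rintro s₁ rfl
      cases s' with
      | inl y =>
        obtain ⟨σ₁, σ₂, t₁, t₂, rfl, p1, p2⟩ := ih y rfl
        exact ⟨a :: σ₁, σ₂, t₁, t₂, rfl, .cons ha p1, p2⟩
      | inr y =>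
        obtain ⟨t₂, q2⟩ := split2 _ _ _ q y rfl
        exact ⟨[], a :: w, s₁, t₂, rfl, .nil _, .cons ha q2⟩
  have emb1 : ∀ (s : S₁) σ t, IsPath h₁ s σ t → IsPath h (.inl s) σ (.inl t) := by
    intro s σ t p
    induction p with
    | nil s => exact .nil _
    | cons ha _ ih => exact .cons ha ih
  have emb2 : ∀ (s : S₂) σ t, IsPath h₂ s σ t → IsPath h (.inr s) σ (.inr t) := by
    intro s σ t p
    induction p with
    | nil s => exact .nil _
    | cons ha _ ih => exact .cons ha ih
  have app : ∀ (s : S₁ ⊕ S₂) σ₁ m σ₂ t, IsPath h s σ₁ m → IsPath h m σ₂ t →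
      IsPath h s (σ₁ ++ σ₂) t := by
    intro s σ₁ m σ₂ t p q
    induction p with
    | nil => exact q
    | cons ha _ ih => exact .cons ha (ih q)
  ext w
  constructor
  · rintro ⟨σ, t, p, hw⟩
    obtain ⟨σ₁, σ₂, t₁, t₂, rfl, p1, p2⟩ := split1 _ _ _ p init₁ rfl
    refine ⟨fun i => σ₁.filter (fun a => tape a = i), ⟨σ₁, t₁, p1, fun _ => rfl⟩,
      fun i => σ₂.filter (fun a => tape a = i), ⟨σ₂, t₂, p2, fun _ => rfl⟩, fun i => ?_⟩
    rw [← hw i, List.filter_append]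
  · rintro ⟨u, ⟨σ₁, t₁, p1, hu⟩, v, ⟨σ₂, t₂, p2, hv⟩, hw⟩
    refine ⟨σ₁ ++ σ₂, ?_⟩
    have pfirst : IsPath h (.inl init₁) σ₁ (.inl t₁) := emb1 _ _ _ p1
    have : ∃ t, IsPath h (.inl t₁) σ₂ t := by
      cases p2 with
      | nil => exact ⟨.inl t₁, .nil _⟩
      | @cons _ a s' w' _ ha q => exact ⟨.inr t₂, .cons (show h (.inl t₁) a (.inr s') from ha) (emb2 _ _ _ q)⟩
    obtain ⟨t, psecond⟩ := this
    refine ⟨t, app _ _ _ _ _ pfirst psecond, fun i => ?_⟩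
    rw [List.filter_append, hu i, hv i, hw i]
end

section
/- Multi-tape FA with all states final are not closed under intersection: with two tapes over alphabets {a₁} and {a₂}, there exist all-states-final automata N₁ and N₂ with 𝓛(N₁) the set of tuples arising from {ε, a₁, a₁a₂} and 𝓛(N₂) from {ε, a₂, a₂a₁}, such that no all-states-final multi-tape FA M has 𝓛(M) = 𝓛(N₁) ∩ 𝓛(N₂) = {(ε,ε), (a₁,a₂)}; any automaton accepting (a₁,a₂) must, being all-states-final, also accept (a₁,ε) or (ε,a₂). -/
/-- The two-tape setting: alphabet `Fin 2`, letter `0` (= `a₁`) on tape `0`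
and letter `1` (= `a₂`) on tape `1`. -/
def tape2 : Fin 2 → Fin 2 := id

def chain (x y : Fin 2) (s : Fin 3) (a : Fin 2) (s' : Fin 3) : Prop :=
  (s = 0 ∧ a = x ∧ s' = 1) ∨ (s = 1 ∧ a = y ∧ s' = 2)

lemma chain_words (x y : Fin 2) : ∀ {s : Fin 3} {σ : List (Fin 2)} {t : Fin 3},
    IsPath (chain x y) s σ t → s = 0 → σ = [] ∨ σ = [x] ∨ σ = [x, y] := by
  intro s σ t p
  induction p with
  | nil s => intro; exact Or.inl rfl
  | cons ha p ih =>
    intro hs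
    subst hs
    rcases ha with ⟨_, rfl, rfl⟩ | ⟨h0, _, _⟩
    · -- now at state 1, path p from 1
      cases p with
      | nil => exact Or.inr (Or.inl rfl)
      | cons hb q =>
        rcases hb with ⟨h1, _, _⟩ | ⟨_, rfl, rfl⟩
        · exact absurd h1 (by decide)
        · cases q with
          | nil => exact Or.inr (Or.inr rfl)
          | cons hc _ =>
            rcases hc with ⟨h2, _, _⟩ | ⟨h2, _, _⟩ <;> exact absurd h2 (by decide)
    · exact absurd h0 (by decide)

lemma chain_lang (x y : Fin 2) :
    TupleLang tape2 (0 : Fin 3) (chain x y) =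
      { w | (∀ i, ([] : List (Fin 2)).filter (fun a => tape2 a = i) = w i) ∨
            (∀ i, [x].filter (fun a => tape2 a = i) = w i) ∨
            (∀ i, [x, y].filter (fun a => tape2 a = i) = w i) } := by
  ext w
  constructor
  · rintro ⟨σ, t, p, hf⟩
    rcases chain_words x y p rfl with rfl | rfl | rfl
    · exact Or.inl hf
    · exact Or.inr (Or.inl hf)
    · exact Or.inr (Or.inr hf)
  · rintro (hf | hf | hf)
    · exact ⟨[], 0, IsPath.nil _, hf⟩
    · exact ⟨[x], 1, IsPath.cons (Or.inl ⟨rfl, rfl, rfl⟩) (IsPath.nil _), hf⟩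
    · exact ⟨[x, y], 2, IsPath.cons (Or.inl ⟨rfl, rfl, rfl⟩)
        (IsPath.cons (Or.inr ⟨rfl, rfl, rfl⟩) (IsPath.nil _)), hf⟩

/-- multi-tape FA with all states final are not closed under
intersection: there are all-states-final automata with tuple languages coming
from `{ε, a₁, a₁a₂}` and `{ε, a₂, a₂a₁}`, whose intersection
`{(ε,ε), (a₁,a₂)}` is the tuple language of no all-states-final automaton. -/
theorem mfa_not_closed_inter :
    (∃ (S₁ : Type) (_ : Fintype S₁) (init₁ : S₁) (h₁ : S₁ → Fin 2 → S₁ → Prop),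
        TupleLang tape2 init₁ h₁ =
          {![[], []], ![[(0 : Fin 2)], []], ![[(0 : Fin 2)], [(1 : Fin 2)]]}) ∧
    (∃ (S₂ : Type) (_ : Fintype S₂) (init₂ : S₂) (h₂ : S₂ → Fin 2 → S₂ → Prop),
        TupleLang tape2 init₂ h₂ =
          {![[], []], ![[], [(1 : Fin 2)]], ![[(0 : Fin 2)], [(1 : Fin 2)]]}) ∧
    (∀ (S : Type) (init : S) (h : S → Fin 2 → S → Prop),
        TupleLang tape2 init h ≠ {![[], []], ![[(0 : Fin 2)], [(1 : Fin 2)]]}) := by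
  refine ⟨⟨Fin 3, inferInstance, 0, chain 0 1, ?_⟩,
         ⟨Fin 3, inferInstance, 0, chain 1 0, ?_⟩, ?_⟩
  · rw [chain_lang]
    ext w
    simp only [Set.mem_setOf_eq, Set.mem_insert_iff, Set.mem_singleton_iff]
    constructor
    · rintro (hf | hf | hf)
      · left; funext i; rw [← hf i]; fin_cases i <;> decide
      · right; left; funext i; rw [← hf i]; fin_cases i <;> decide
      · right; right; funext i; rw [← hf i]; fin_cases i <;> decide
    · rintro (rfl | rfl | rfl)
      · left; intro i; fin_cases i <;> decide
      · right; left; intro i; fin_cases i <;> decide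
      · right; right; intro i; fin_cases i <;> decide
  · rw [chain_lang]
    ext w
    simp only [Set.mem_setOf_eq, Set.mem_insert_iff, Set.mem_singleton_iff]
    constructor
    · rintro (hf | hf | hf)
      · left; funext i; rw [← hf i]; fin_cases i <;> decide
      · right; left; funext i; rw [← hf i]; fin_cases i <;> decide
      · right; right; funext i; rw [← hf i]; fin_cases i <;> decide
    · rintro (rfl | rfl | rfl)
      · left; intro i; fin_cases i <;> decide
      · right; left; intro i; fin_cases i <;> decide
      · right; right; intro i; fin_cases i <;> decide
  · intro S init h heq
    have hmem : ![[(0 : Fin 2)], [(1 : Fin 2)]] ∈ TupleLang tape2 init h := by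
      rw [heq]; right; rfl
    obtain ⟨σ, t, p, hf⟩ := hmem
    cases p with
    | nil =>
      have := hf 0
      simp at this
    | cons ha p' =>
      rename_i a s' rest
      have hw' : (fun i => [a].filter (fun b => tape2 b = i)) ∈ TupleLang tape2 init h :=
        ⟨[a], s', IsPath.cons ha (IsPath.nil _), fun i => rfl⟩
      rw [heq] at hw'
      simp only [Set.mem_insert_iff, Set.mem_singleton_iff] at hw'
      fin_cases a <;> rcases hw' with hw' | hw'
      · exact absurd (congrFun hw' 0) (by decide)
      · exact absurd (congrFun hw' 1) (by decide)
      · exact absurd (congrFun hw' 1) (by decide)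
      · exact absurd (congrFun hw' 0) (by decide)
end

section
/- For the FSM construction 𝓕: given r-tape FA N and M over the same alphabets, 𝓛(N) ⊆ 𝓛(M) if and only if 𝓕(N) ⊑_s 𝓕(M). -/
/-- The transition relation of the FSM `𝓕(N)` built from a multi-tape FA with
transition relation `h`.  States are `Option S` (`none` is the sink `s_e`).
`FTrans h q z b q'` means: in state `q`, input `z` can produce output `b`
(at port `r+1`) and move to `q'`.  While following a path of `N` the output can
be `0` or `1`; once the path diverges (or from the sink) the output is `0`. -/
def FTrans {A S : Type} (h : S → A → S → Prop) :
    Option S → A → Bool → Option S → Prop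
  | some s, z, _, some s' => h s z s'
  | some s, z, b, none => (¬ ∃ s', h s z s') ∧ b = false
  | none, _, b, none => b = false
  | none, _, _, some _ => False

/-- Paths of the FSM `𝓕(N)`: a global trace is a list of input/output pairs. -/
inductive FSMPath {A S : Type} (h : S → A → S → Prop) :
    Option S → List (A × Bool) → Option S → Prop
  | nil (q : Option S) : FSMPath h q [] q
  | cons {q : Option S} {z : A} {b : Bool} {q' : Option S} {ρ : List (A × Bool)}
      {t : Option S} :
      FTrans h q z b q' → FSMPath h q' ρ t → FSMPath h q ((z, b) :: ρ) t

/-- The language of global traces of `𝓕(N)` (all states final, so every path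
from the initial state yields a trace). -/
def FSMLang {A S : Type} (init : S) (h : S → A → S → Prop) : Set (List (A × Bool)) :=
  { ρ | ∃ t : Option S, FSMPath h (some init) ρ t }

/-- `~` for global traces of `𝓕(N)`: the inputs occur at ports `1,…,r`
(given by `tape`) and the outputs at port `r+1`, so two traces are equivalent
iff their input projections agree on every tape and their output sequences at
port `r+1` coincide. -/
def FSMEquiv {A : Type} {r : ℕ} (tape : A → Fin r) (ρ ρ' : List (A × Bool)) : Prop :=
  (∀ i : Fin r, (ρ.map Prod.fst).filter (fun a => tape a = i) =
      (ρ'.map Prod.fst).filter (fun a => tape a = i)) ∧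
  ρ.map Prod.snd = ρ'.map Prod.snd

section Aux

variable {A S : Type} {h : S → A → S → Prop}

/-- Appending FSM paths. -/
lemma FSMPath.append {q q' q'' : Option S} {ρ ρ' : List (A × Bool)}
    (p1 : FSMPath h q ρ q') (p2 : FSMPath h q' ρ' q'') :
    FSMPath h q (ρ ++ ρ') q'' := by
  induction p1 with
  | nil => simpa
  | cons hst _ ih => exact FSMPath.cons hst (ih p2)

/-- From the sink, every output is `false` and we stay at the sink. -/
lemma fsmpath_none {ρ : List (A × Bool)} {q : Option S}
    (p : FSMPath h none ρ q) : q = none ∧ ∀ x ∈ ρ, x.2 = false := by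
  induction ρ generalizing q with
  | nil => cases p; exact ⟨rfl, by simp⟩
  | cons a ρ ih =>
    obtain ⟨z, b⟩ := a
    cases p with
    | cons hst p' =>
      rename_i q'
      cases q' with
      | none =>
        obtain ⟨hq, hall⟩ := ih p'
        refine ⟨hq, ?_⟩
        intro x hx
        rcases List.mem_cons.mp hx with hx | hx
        · subst hx; exact hst
        · exact hall x hx
      | some s => exact absurd hst (by simp [FTrans])

/-- A trace along an `IsPath` (with arbitrary outputs) is an FSM path. -/
lemma ispath_to_fsm {s t : S} (ρ : List (A × Bool))
    (p : IsPath h s (ρ.map Prod.fst) t) : FSMPath h (some s) ρ (some t) := by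
  induction ρ generalizing s with
  | nil => cases p; exact FSMPath.nil _
  | cons a ρ ih =>
    obtain ⟨z, b⟩ := a
    cases p with
    | cons hs p' => exact FSMPath.cons (show FTrans h (some s) z b (some _) from hs) (ih p')

/-- An FSM path all of whose outputs are `true` follows a real path of the FA. -/
lemma fsm_true_to_ispath {s : S} {ρ : List (A × Bool)} {q : Option S}
    (p : FSMPath h (some s) ρ q) (hall : ∀ x ∈ ρ, x.2 = true) :
    ∃ t, q = some t ∧ IsPath h s (ρ.map Prod.fst) t := by
  induction ρ generalizing s with
  | nil => cases p; exact ⟨s, rfl, IsPath.nil s⟩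
  | cons a ρ ih =>
    obtain ⟨z, b⟩ := a
    have hb : b = true := hall (z, b) (List.mem_cons_self)
    cases p with
    | cons hst p' =>
      rename_i q'
      cases q' with
      | none =>
        exact absurd hst.2 (by simp [hb])
      | some s' =>
        obtain ⟨t, hq, hp⟩ := ih p' (fun x hx => hall x (List.mem_cons_of_mem _ hx))
        exact ⟨t, hq, IsPath.cons hst hp⟩

/-- Decomposition of an arbitrary FSM path starting in a real state. -/
lemma fsm_decompose {s : S} {ρ : List (A × Bool)} {q : Option S}
    (p : FSMPath h (some s) ρ q) :
    (∃ t, q = some t ∧ IsPath h s (ρ.map Prod.fst) t) ∨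
    (∃ ρ₁ z ρ₂ t, ρ = ρ₁ ++ (z, false) :: ρ₂ ∧ IsPath h s (ρ₁.map Prod.fst) t ∧
      (¬ ∃ s', h t z s') ∧ (∀ x ∈ ρ₂, x.2 = false)) := by
  induction ρ generalizing s with
  | nil => cases p; exact Or.inl ⟨s, rfl, IsPath.nil s⟩
  | cons a ρ ih =>
    obtain ⟨z, b⟩ := a
    cases p with
    | cons hst p' =>
      rename_i q'
      cases q' with
      | none =>
        obtain ⟨hne, hb⟩ := hst
        subst hb
        exact Or.inr ⟨[], z, ρ, s, rfl, IsPath.nil s, hne, (fsmpath_none p').2⟩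
      | some s' =>
        rcases ih p' with ⟨t, hq, hp⟩ | ⟨ρ₁, z', ρ₂, t, heq, hp, hne, hall⟩
        · exact Or.inl ⟨t, hq, IsPath.cons hst hp⟩
        · exact Or.inr ⟨(z, b) :: ρ₁, z', ρ₂, t, by rw [heq]; rfl,
            IsPath.cons hst hp, hne, hall⟩

/-- From any FSM state, any input sequence can be consumed with all outputs `false`. -/
lemma false_path (τ : List A) (q : Option S) :
    ∃ q', FSMPath h q (τ.map (fun z => (z, false))) q' := by
  induction τ generalizing q with
  | nil => exact ⟨q, FSMPath.nil q⟩
  | cons z τ ih =>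
    cases q with
    | none =>
      obtain ⟨q', p⟩ := ih none
      exact ⟨q', FSMPath.cons (show FTrans h none z false none from rfl) p⟩
    | some s =>
      by_cases hs : ∃ s', h s z s'
      · obtain ⟨s', hs'⟩ := hs
        obtain ⟨q', p⟩ := ih (some s')
        exact ⟨q', FSMPath.cons (show FTrans h (some s) z false (some s') from hs') p⟩
      · obtain ⟨q', p⟩ := ih none
        exact ⟨q', FSMPath.cons (show FTrans h (some s) z false none from ⟨hs, rfl⟩) p⟩

/-- If two words have the same projection on every tape, they have the same length. -/
lemma length_eq_of_filters {r : ℕ} (tape : A → Fin r) {σ σ' : List A}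
    (hf : ∀ i : Fin r, σ.filter (fun a => tape a = i) = σ'.filter (fun a => tape a = i)) :
    σ.length = σ'.length := by
  have key : ∀ τ : List A, τ.length = ∑ i : Fin r, (τ.filter (fun a => tape a = i)).length := by
    intro τ
    induction τ with
    | nil => simp
    | cons a τ ih =>
      have : ∀ i : Fin r, ((a :: τ).filter (fun x => tape x = i)).length
          = (if tape a = i then 1 else 0) + (τ.filter (fun x => tape x = i)).length := by
        intro i
        by_cases hi : tape a = i <;> simp [List.filter_cons, hi, Nat.add_comm]
      simp only [this, Finset.sum_add_distrib, ← ih, List.length_cons]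
      rw [Finset.sum_ite_eq (Finset.univ) (tape a) (fun _ => 1)]
      simp [Nat.add_comm]
  rw [key σ, key σ']
  exact Finset.sum_congr rfl (fun i _ => by rw [hf i])

end Aux

/-- `𝓛(N) ⊆ 𝓛(M)` iff `𝓕(N) ⊑_s 𝓕(M)`. -/
theorem tuple_lang_subset_iff_strong_conf {A : Type} {r : ℕ} (tape : A → Fin r)
    {S₁ : Type} [Fintype S₁] (init₁ : S₁) (h₁ : S₁ → A → S₁ → Prop)
    {S₂ : Type} [Fintype S₂] (init₂ : S₂) (h₂ : S₂ → A → S₂ → Prop) :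
    TupleLang tape init₁ h₁ ⊆ TupleLang tape init₂ h₂ ↔
      (∀ ρ ∈ FSMLang init₁ h₁, ∃ ρ' ∈ FSMLang init₂ h₂, FSMEquiv tape ρ ρ') := by
  constructor
  · -- 𝓛(N) ⊆ 𝓛(M) → strong conformance
    intro H ρ hρ
    obtain ⟨q, p⟩ := hρ
    rcases fsm_decompose p with ⟨t, _, hp⟩ | ⟨ρ₁, z, ρ₂, t, heq, hp, _, hall⟩
    · -- the whole trace follows a real path of N
      have hw : (fun i => (ρ.map Prod.fst).filter (fun a => tape a = i))
          ∈ TupleLang tape init₁ h₁ := ⟨ρ.map Prod.fst, t, hp, fun i => rfl⟩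
      obtain ⟨σ', t₂, hp₂, hf⟩ := H hw
      have hlen : (ρ.map Prod.fst).length = σ'.length := length_eq_of_filters tape
        (fun i => by rw [hf i])
      refine ⟨σ'.zip (ρ.map Prod.snd), ⟨some t₂, ?_⟩, ?_, ?_⟩
      · apply ispath_to_fsm
        rwa [List.map_fst_zip (by simp at hlen ⊢; omega)]
      · intro i
        rw [List.map_fst_zip (by simp at hlen ⊢; omega), hf i]
      · rw [List.map_snd_zip (by simp at hlen ⊢; omega)]
    · -- the trace follows a real path, then diverges
      have hw : (fun i => (ρ₁.map Prod.fst).filter (fun a => tape a = i))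
          ∈ TupleLang tape init₁ h₁ := ⟨ρ₁.map Prod.fst, t, hp, fun i => rfl⟩
      obtain ⟨σ', t₂, hp₂, hf⟩ := H hw
      have hlen : (ρ₁.map Prod.fst).length = σ'.length := length_eq_of_filters tape
        (fun i => by rw [hf i])
      have hzip1 : (σ'.zip (ρ₁.map Prod.snd)).map Prod.fst = σ' :=
        List.map_fst_zip (by simp at hlen ⊢; omega)
      have hzip2 : (σ'.zip (ρ₁.map Prod.snd)).map Prod.snd = ρ₁.map Prod.snd :=
        List.map_snd_zip (by simp at hlen ⊢; omega)
      have p₂₁ : FSMPath h₂ (some init₂) (σ'.zip (ρ₁.map Prod.snd)) (some t₂) := by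
        apply ispath_to_fsm; rwa [hzip1]
      obtain ⟨q', ptail⟩ := false_path (h := h₂) (z :: ρ₂.map Prod.fst) (some t₂)
      refine ⟨σ'.zip (ρ₁.map Prod.snd) ++ (z :: ρ₂.map Prod.fst).map (fun z => (z, false)),
        ⟨q', p₂₁.append ptail⟩, ?_, ?_⟩
      · intro i
        simp only [heq, List.map_append, List.filter_append, hzip1, List.map_map,
          List.map_cons, Function.comp_def]
        rw [hf i]
      · have hρ₂ : ρ₂.map Prod.snd = ρ₂.map (fun _ => false) :=
          List.map_congr_left (fun x hx => hall x hx)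
        simp only [heq, List.map_append, hzip2, List.map_cons, List.map_map,
          Function.comp_def]
        rw [hρ₂]
  · -- strong conformance → 𝓛(N) ⊆ 𝓛(M)
    intro C w hw
    obtain ⟨σ, t, hp, hf⟩ := hw
    have hfst : (σ.map (fun z => (z, true))).map Prod.fst = σ := by
      simp [List.map_map, Function.comp_def]
    have hρ : σ.map (fun z => (z, true)) ∈ FSMLang init₁ h₁ :=
      ⟨some t, ispath_to_fsm _ (by rwa [hfst])⟩
    obtain ⟨ρ', ⟨q, p'⟩, heqv⟩ := C _ hρ
    have hall : ∀ x ∈ ρ', x.2 = true := by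
      intro x hx
      have h1 : x.2 ∈ ρ'.map Prod.snd := List.mem_map_of_mem (f := Prod.snd) hx
      rw [← heqv.2] at h1
      simp only [List.map_map, Function.comp_def, List.mem_map] at h1
      obtain ⟨a, _, ha⟩ := h1
      exact ha.symm
    obtain ⟨t₂, _, hp₂⟩ := fsm_true_to_ispath p' hall
    refine ⟨ρ'.map Prod.fst, t₂, hp₂, fun i => ?_⟩
    rw [← (heqv.1 i), hfst, hf i]
end

section
/- If every transition of FSMs M and N produces a (non-null) output at every port, then for traces σ, σ' ∈ L(N) ∪ L(M), σ ~ σ' implies σ = σ'; consequently N ⊑_s M if and only if L(N) ⊆ L(M). -/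
/-- A transition of an FSM in which every transition produces output at every
port: an input `x` (at port `portIn x`) together with an output `y p` at every
port `p`.  The local trace at port `p` of a global trace lists, for each
transition, the input (if it is at `p`) followed by the output at `p`. -/
def localTr {In Out P : Type} [DecidableEq P] (portIn : In → P) (p : P)
    (σ : List (In × (P → Out))) : List (In ⊕ Out) :=
  σ.flatMap (fun s =>
    (if portIn s.1 = p then [Sum.inl s.1] else []) ++ [Sum.inr (s.2 p)])

theorem localTr_inj {In Out P : Type} [DecidableEq P] [Nonempty P]
    (portIn : In → P) :
    ∀ σ σ' : List (In × (P → Out)),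
      (∀ p : P, localTr portIn p σ = localTr portIn p σ') → σ = σ' := by
  intro σ
  induction σ with
  | nil =>
    intro σ' h
    cases σ' with
    | nil => rfl
    | cons s' t' =>
      exfalso
      have p := Classical.arbitrary P
      have := h p
      simp [localTr] at this
  | cons s t ih =>
    intro σ' h
    cases σ' with
    | nil =>
      exfalso
      have p := Classical.arbitrary P
      have := h p
      simp [localTr] at this
    | cons s' t' =>
      -- first: ports of the two inputs agree
      have hport : portIn s'.1 = portIn s.1 := by
        by_contra hne
        have := h (portIn s.1)
        simp [localTr, hne] at this
      have h1 : s.1 = s'.1 := by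
        have := h (portIn s.1)
        simp [localTr, hport] at this
        exact this.1
      have h2 : ∀ q, s.2 q = s'.2 q ∧ localTr portIn q t = localTr portIn q t' := by
        intro q
        have hq := h q
        by_cases hc : portIn s.1 = q
        · have hc' : portIn s'.1 = q := hport.trans hc
          simp [localTr, hc, hc'] at hq
          exact ⟨hq.2.1, hq.2.2⟩
        · have hc' : ¬ portIn s'.1 = q := fun h' => hc (hport ▸ h')
          simp [localTr, hc, hc'] at hq
          exact hq
      have hs : s = s' := by
        ext
        · exact h1
        · exact (h2 _).1
      have ht : t = t' := ih t' (fun q => (h2 q).2)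
      rw [hs, ht]

/-- if every transition produces output at every port then traces
of `L(N) ∪ L(M)` that are `~`-equivalent are equal; consequently `N ⊑_s M` iff
`L(N) ⊆ L(M)`. -/
theorem strong_conf_iff_subset_of_full_output {In Out P : Type} [DecidableEq P]
    [Nonempty P] (portIn : In → P) (LN LM : Set (List (In × (P → Out)))) :
    (∀ σ ∈ LN ∪ LM, ∀ σ' ∈ LN ∪ LM,
        (∀ p : P, localTr portIn p σ = localTr portIn p σ') → σ = σ') ∧
    ((∀ σ ∈ LN, ∃ σ' ∈ LM, ∀ p : P, localTr portIn p σ = localTr portIn p σ') ↔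
        LN ⊆ LM) := by
  constructor
  · intro σ _ σ' _ h
    exact localTr_inj portIn σ σ' h
  · constructor
    · intro h σ hσ
      obtain ⟨σ', hσ', heq⟩ := h σ hσ
      have := localTr_inj portIn σ σ' heq
      rwa [this]
    · intro h σ hσ
      exact ⟨σ, h hσ, fun _ => rfl⟩
end
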